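/- Let x be a nonzero real number and define real sequences g_n(x), h_n(x) by g_1(x) = 2/x, h_1(x) = 1, and for n ≥ 2: g_n(x) = g_{n−1}(x)(1 − 4/x²) + 4h_{n−1}(x)/x and h_n(x) = h_{n−1}(x)(1 − 4/x²) − 4g_{n−1}(x)/x. Then the series 2 ∑_{n=1}^∞ (1/(2n−1)) · g_n(x) / ( g_n(x)² + h_n(x)² ) converges and its sum equals arctan(x). -/

import Mathlib

/-- The pair `(g_{n+1}(x), h_{n+1}(x))` of the two-step iteration with
`g_1(x) = 2/x`, `h_1(x) = 1`,
`g_n(x) = g_{n-1}(x)(1 - 4/x²) + 4 h_{n-1}(x)/x` and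
`h_n(x) = h_{n-1}(x)(1 - 4/x²) - 4 g_{n-1}(x)/x`. -/
noncomputable def gh (x : ℝ) : ℕ → ℝ × ℝ
  | 0 => (2 / x, 1)
  | n + 1 =>
      ((gh x n).1 * (1 - 4 / x ^ 2) + 4 * (gh x n).2 / x,
       (gh x n).2 * (1 - 4 / x ^ 2) - 4 * (gh x n).1 / x)

open Complex in
lemma arg_eq_arctan' {z : ℂ} (hz : 0 < z.re) : z.arg = Real.arctan (z.im / z.re) := by
  have h := Complex.abs_arg_lt_pi_div_two_iff.mpr (Or.inl hz)
  rw [abs_lt] at h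
  rw [← Complex.tan_arg, Real.arctan_tan h.1 h.2]

open Complex in
theorem arctan_iteration_series (x : ℝ) (hx : x ≠ 0) :
    HasSum (fun n : ℕ =>
      2 * (1 / (2 * (n : ℝ) + 1)) * (gh x n).1 / ((gh x n).1 ^ 2 + (gh x n).2 ^ 2))
      (Real.arctan x) := by
  have hx' : (x:ℂ) ≠ 0 := Complex.ofReal_ne_zero.mpr hx
  set v : ℂ := ((x:ℂ) - 2*I)/x with hv
  set u : ℂ := (x:ℂ)/((x:ℂ) - 2*I) with hu
  have hx2 : (x:ℂ) - 2*I ≠ 0 := by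
    intro h
    have := congrArg Complex.im h
    simp at this
  have huv : v⁻¹ = u := by rw [hv, hu]; field_simp
  have hunorm : ‖u‖ < 1 := by
    have h1 : ‖(x:ℂ)‖^2 = x^2 := by rw [Complex.norm_real]; exact sq_abs x
    have h2 : ‖(x:ℂ) - 2*I‖^2 = x^2 + 4 := by
      rw [Complex.sq_norm, Complex.normSq_apply]
      simp
      ring
    rw [hu, norm_div, div_lt_one (norm_pos_iff.mpr hx2)]
    nlinarith [norm_nonneg ((x:ℂ)), norm_nonneg ((x:ℂ) - 2*I)]
  -- induction claim
  have claim : ∀ n : ℕ, ((gh x n).1 : ℂ) + (gh x n).2 * I = I * v ^ (2*n+1) := by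
    intro n
    induction n with
    | zero => simp only [gh, hv]; push_cast; field_simp; linear_combination (2:ℂ) * Complex.I_sq
    | succ n ih =>
        have h2 : 2*(n+1)+1 = (2*n+1)+2 := by ring
        rw [h2, pow_add, ← mul_assoc, ← ih]
        simp only [gh]
        push_cast
        rw [hv]
        field_simp
        ring_nf
        simp only [Complex.I_sq, show (I:ℂ)^3 = -I by rw [pow_succ, Complex.I_sq]; ring]
        ring
  have hvne : v ≠ 0 := div_ne_zero hx2 hx'
  have h1xI : 1 + (x:ℂ)*I ≠ 0 := by
    intro h
    have := congrArg Complex.re h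
    simp at this
  have hIu : ‖I * u‖ < 1 := by simpa using hunorm
  have hsum := (Complex.hasSum_arctan hIu).mul_left (-2)
  have hterm : ∀ n : ℕ, (-1:ℂ)^n * (I*u)^(2*n+1) = I * u^(2*n+1) := by
    intro n
    rw [mul_pow, pow_succ, pow_mul, Complex.I_sq]
    ring_nf
    rw [show ((-1:ℂ))^(n*2) = 1 from by rw [pow_mul', neg_one_sq, one_pow], mul_one]
  have hsum2 := hsum.mapL Complex.reCLM
  -- pointwise
  have hpt : ∀ n : ℕ, 2 * (1 / (2 * (n : ℝ) + 1)) * (gh x n).1 / ((gh x n).1 ^ 2 + (gh x n).2 ^ 2)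
      = Complex.reCLM (-2 * ((-1:ℂ)^n * (I*u)^(2*n+1) / ((2*n+1 : ℕ) : ℂ))) := by
    intro n
    have hg : (gh x n).1 = (I*v^(2*n+1)).re := by
      simpa using congrArg Complex.re (claim n)
    have hh : (gh x n).2 = (I*v^(2*n+1)).im := by
      simpa using congrArg Complex.im (claim n)
    have hinv : (I*v^(2*n+1))⁻¹ = -I * u^(2*n+1) := by
      rw [mul_inv, ← inv_pow, huv, Complex.inv_I]
    have hns : (gh x n).1 ^ 2 + (gh x n).2 ^ 2 = Complex.normSq (I*v^(2*n+1)) := by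
      rw [hg, hh, Complex.normSq_apply]; ring
    rw [hterm n, hns, hg]
    simp only [Complex.reCLM_apply]
    rw [show (-2 : ℂ) * (I * u^(2*n+1) / ((2*n+1:ℕ):ℂ)) = (-2 * (I * u^(2*n+1))) / ((2*n+1:ℕ):ℂ) by ring,
      Complex.div_natCast_re]
    have : (-2 * (I * u ^ (2 * n + 1))).re = 2 * (u ^ (2*n+1)).im := by
      simp [Complex.mul_re]
    rw [this]
    have h2 : ((I*v^(2*n+1))⁻¹).re = (I*v^(2*n+1)).re / Complex.normSq (I*v^(2*n+1)) :=
      Complex.inv_re _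
    rw [hinv] at h2
    have h3 : (-I * u^(2*n+1)).re = (u ^ (2*n+1)).im := by simp [Complex.mul_re]
    rw [h3] at h2
    rw [show 2 * (1 / (2 * (n:ℝ) + 1)) * (I * v ^ (2*n+1)).re / Complex.normSq (I*v^(2*n+1))
        = 2 * (1/(2*(n:ℝ)+1)) * ((I*v^(2*n+1)).re / Complex.normSq (I*v^(2*n+1))) from by ring,
      ← h2]
    push_cast
    ring
  -- value
  have hval : Complex.reCLM (-2 * Complex.arctan (I*u)) = Real.arctan x := by
    have hden : (1:ℂ) - I * u * I ≠ 0 := by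
      rw [hu]
      intro h
      field_simp at h
      have h2 : (2*(x:ℂ) - 2*I) = 0 := by
        rw [sub_eq_zero, eq_comm, div_eq_one_iff_eq (by simpa [mul_comm] using hx2)] at h
        linear_combination -h + (x:ℂ) * Complex.I_sq
      have := congrArg Complex.im h2
      simp at this
    have key : (1 + (I*u)*I)/(1 - (I*u)*I) = (1 + (x:ℂ)*I)⁻¹ := by
      rw [inv_eq_one_div, div_eq_div_iff hden h1xI, hu]
      have h3 : (-(I * 2) + (x:ℂ)) ≠ 0 := by intro h; apply hx2; linear_combination h
      field_simp
      ring_nf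
      simp only [Complex.I_sq, show (I:ℂ)^3 = -I from by rw [pow_succ, Complex.I_sq]; ring]
      ring
      field_simp
      ring_nf
      simp only [Complex.I_sq]
      ring
    have harg : (1 + (x:ℂ)*I).arg ≠ Real.pi := by
      intro h
      rw [Complex.arg_eq_pi_iff] at h
      simp at h
      linarith [h.1]
    rw [Complex.arctan, key, Complex.log_inv _ harg]
    simp only [Complex.reCLM_apply]
    have hre : (-2 * (-I / 2 * -Complex.log (1 + ↑x * I))).re = (Complex.log (1+(x:ℂ)*I)).im := by
      rw [show (-2:ℂ) * (-I/2 * -Complex.log (1+(x:ℂ)*I)) = -(I * Complex.log (1+(x:ℂ)*I)) from by ring]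
      simp [Complex.mul_re]
    rw [hre, Complex.log_im, arg_eq_arctan' (by simp : (0:ℝ) < (1 + (x:ℂ)*I).re)]
    norm_num
  rw [← hval]
  simp only [hpt]
  exact hsum2
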